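/- arXiv:2001.00293 — 2 statements merged into one kernel-verified Lean document; each statement's English description precedes it below -/
import Mathlib

section
/- Let d ≥ 1 and let s, l be real numbers with l ≥ s. Then there do not exist linear maps W₁, W₂, W₃ : ℝ^d → ℝ and vectors Y₀¹, Y₁¹, Y₀², Y₁², Y₀³, Y₁³ ∈ ℝ^d such that all four of the following hold simultaneously: W₁(Y₀¹) + W₂(Y₀²) + W₃(Y₀³) > l, W₁(Y₁¹) + W₂(Y₀²) + W₃(Y₀³) < s, W₁(Y₁¹) + W₂(Y₁²) + W₃(Y₁³) > l, and W₁(Y₀¹) + W₂(Y₁²) + W₃(Y₁³) < s. (Consequently, a linear tuplewise similarity function S(X₁, X₂, X₃) = Σᵢ WᵢXᵢ cannot score every hyperedge above a threshold l and every non-hyperedge below a threshold s ≤ l in the 3-type, 2-cluster hyper-network where a hyperedge exists iff the three nodes share the same cluster id.) -/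
/-- A linear tuplewise similarity function `S(X₁,X₂,X₃) = W₁X₁ + W₂X₂ + W₃X₃` cannot
score every hyperedge above `l` and every non-hyperedge below `s ≤ l` in the 3-type,
2-cluster hyper-network. -/
theorem dhne_no_linear_similarity (d : ℕ) (hd : 1 ≤ d) (s l : ℝ) (hls : s ≤ l) :
    ¬ ∃ (W₁ W₂ W₃ : (Fin d → ℝ) →ₗ[ℝ] ℝ)
        (Y01 Y11 Y02 Y12 Y03 Y13 : Fin d → ℝ),
      W₁ Y01 + W₂ Y02 + W₃ Y03 > l ∧
      W₁ Y11 + W₂ Y02 + W₃ Y03 < s ∧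
      W₁ Y11 + W₂ Y12 + W₃ Y13 > l ∧
      W₁ Y01 + W₂ Y12 + W₃ Y13 < s := by
  rintro ⟨W₁, W₂, W₃, a, b, c, e, f, g, h1, h2, h3, h4⟩
  linarith
end

section
/- Consider an LSTM cell recurrence with identity activation functions (i.e., with the sigmoid σ and tanh replaced by the identity): given input sequence x₁, ..., x_T ∈ ℝ² with x_t = (F_t, C_t), hidden states h_t ∈ ℝ², cell states c_t ∈ ℝ², parameters W_f, W_i, W_o, W_C ∈ ℝ^{2×4}, b_f, b_i, b_o, b_C ∈ ℝ², initial states h₀ = c₀ = 0, and updates f_t = W_f·[h_{t−1}; x_t] + b_f, i_t = W_i·[h_{t−1}; x_t] + b_i, o_t = W_o·[h_{t−1}; x_t] + b_o, c̃_t = W_C·[h_{t−1}; x_t] + b_C, c_t = f_t * c_{t−1} + i_t * c̃_t, h_t = o_t * c_t (where * is the entrywise product and [h; x] ∈ ℝ⁴ is concatenation). Then there exists a parameter setting — namely, second rows W_{f,2} = W_{o,2} = (0,0,0,0), W_{i,2} = (0,0,1,0), W_{C,2} = (0,0,0,1), b_{f,2} = b_{o,2} = 1, b_{i,2} = b_{C,2}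 = 0 — such that for every input sequence, the second coordinate of the final hidden state satisfies h_{T,2} = Σ_{t=1}^{T} F_t · C_t. -/
open Matrix

/-- One step of an LSTM cell with identity activation functions.  The state is the
pair `(h, c)` of hidden state and cell state, and the input is `x ∈ ℝ²`; the gates
are `f = W_f·[h; x] + b_f`, `i = W_i·[h; x] + b_i`, `o = W_o·[h; x] + b_o`,
`c̃ = W_C·[h; x] + b_C`, with updates `c' = f * c + i * c̃` and `h' = o * c'`
(entrywise products). -/
def lstmStep (Wf Wi Wo Wc : Matrix (Fin 2) (Fin 4) ℝ) (bf bi bo bc : Fin 2 → ℝ)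
    (hc : (Fin 2 → ℝ) × (Fin 2 → ℝ)) (x : Fin 2 → ℝ) : (Fin 2 → ℝ) × (Fin 2 → ℝ) :=
  let inp : Fin 4 → ℝ := Fin.append hc.1 x
  let f := Wf.mulVec inp + bf
  let i := Wi.mulVec inp + bi
  let o := Wo.mulVec inp + bo
  let ctil := Wc.mulVec inp + bc
  let c := f * hc.2 + i * ctil
  (o * c, c)

/-- Running the identity-activation LSTM on the input sequence `x₁, …, x_T` from the
initial states `h₀ = c₀ = 0`, producing `(h_T, c_T)`. -/
def lstmRun (Wf Wi Wo Wc : Matrix (Fin 2) (Fin 4) ℝ) (bf bi bo bc : Fin 2 → ℝ)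
    (T : ℕ) (x : Fin T → Fin 2 → ℝ) : (Fin 2 → ℝ) × (Fin 2 → ℝ) :=
  (List.ofFn x).foldl (lstmStep Wf Wi Wo Wc bf bi bo bc) (0, 0)

/-- DRNE aggregation theorem (computational core): with second rows
`W_{f,2} = W_{o,2} = (0,0,0,0)`, `W_{i,2} = (0,0,1,0)`, `W_{C,2} = (0,0,0,1)`,
`b_{f,2} = b_{o,2} = 1`, `b_{i,2} = b_{C,2} = 0`, the identity-activation LSTM
satisfies, for every input sequence `x_t = (F_t, C_t)`,
`h_{T,2} = ∑_{t=1}^{T} F_t · C_t`. -/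
theorem drne_lstm_accumulates (Wf Wi Wo Wc : Matrix (Fin 2) (Fin 4) ℝ)
    (bf bi bo bc : Fin 2 → ℝ)
    (hWf : Wf 1 = ![0, 0, 0, 0]) (hWo : Wo 1 = ![0, 0, 0, 0])
    (hWi : Wi 1 = ![0, 0, 1, 0]) (hWc : Wc 1 = ![0, 0, 0, 1])
    (hbf : bf 1 = 1) (hbo : bo 1 = 1) (hbi : bi 1 = 0) (hbc : bc 1 = 0) :
    ∀ (T : ℕ) (x : Fin T → Fin 2 → ℝ),
      (lstmRun Wf Wi Wo Wc bf bi bo bc T x).1 1 = ∑ t, x t 0 * x t 1 := by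
  intro T x
  have step : ∀ (hc : (Fin 2 → ℝ) × (Fin 2 → ℝ)) (v : Fin 2 → ℝ),
      (lstmStep Wf Wi Wo Wc bf bi bo bc hc v).2 1 = hc.2 1 + v 0 * v 1 ∧
      (lstmStep Wf Wi Wo Wc bf bi bo bc hc v).1 1 = hc.2 1 + v 0 * v 1 := by
    intro hc v
    have happ2 : Fin.append hc.1 v 2 = v 0 := rfl
    have happ3 : Fin.append hc.1 v 3 = v 1 := rfl
    simp only [lstmStep, Pi.add_apply, Pi.mul_apply, Matrix.mulVec, dotProduct,
      Fin.sum_univ_four, hWf, hWo, hWi, hWc, hbf, hbo, hbi, hbc, happ2, happ3]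
    have e1 : (![0, 0, 0, 0] : Fin 4 → ℝ) 2 = 0 := rfl
    have e1' : (![0, 0, 0, 0] : Fin 4 → ℝ) 3 = 0 := rfl
    have e2 : (![0, 0, 1, 0] : Fin 4 → ℝ) 2 = 1 := rfl
    have e2' : (![0, 0, 1, 0] : Fin 4 → ℝ) 3 = 0 := rfl
    have e3 : (![0, 0, 0, 1] : Fin 4 → ℝ) 3 = 1 := rfl
    have e3' : (![0, 0, 0, 1] : Fin 4 → ℝ) 2 = 0 := rfl
    norm_num [e1, e1', e2, e2', e3, e3']
  have main : ∀ (l : List (Fin 2 → ℝ)) (hc : (Fin 2 → ℝ) × (Fin 2 → ℝ)),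
      (l.foldl (lstmStep Wf Wi Wo Wc bf bi bo bc) hc).2 1 =
        hc.2 1 + (l.map (fun v => v 0 * v 1)).sum := by
    intro l
    induction l with
    | nil => intro hc; simp
    | cons a l ih =>
      intro hc
      simp only [List.foldl_cons, List.map_cons, List.sum_cons, ih, (step hc a).1]
      ring
  have hfin : ∀ (l : List (Fin 2 → ℝ)) (hc : (Fin 2 → ℝ) × (Fin 2 → ℝ)),
      l ≠ [] → (l.foldl (lstmStep Wf Wi Wo Wc bf bi bo bc) hc).1 1 =
        (l.foldl (lstmStep Wf Wi Wo Wc bf bi bo bc) hc).2 1 := by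
    intro l
    induction l with
    | nil => intro hc h; exact absurd rfl h
    | cons a l ih =>
      intro hc _
      rcases List.eq_nil_or_concat l with rfl | _
      · simp only [List.foldl_cons, List.foldl_nil]
        rw [(step hc a).1, (step hc a).2]
      · simp only [List.foldl_cons]
        exact ih _ (by rintro rfl; simp_all)
  rcases Nat.eq_zero_or_pos T with rfl | hT
  · simp [lstmRun]
  · have hne : List.ofFn x ≠ [] := by
      simp only [ne_eq, List.ofFn_eq_nil_iff]; omega
    rw [lstmRun, hfin _ _ hne, main]
    simp [List.map_ofFn, List.sum_ofFn, Function.comp]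
end
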